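/- Let V be a finite-dimensional real normed vector space and let Ψ be a set of affine functions a : V → ℝ, each with nonzero linear part, such that for every bounded subset of V only finitely many a ∈ Ψ vanish at some point of that subset. Let J ⊆ Ψ be a finite subset whose linear parts are linearly independent, let E^J := {x ∈ V : a(x) = 0 for all a ∈ J}, and assume: (i) there exists x₀ ∈ E^J such that a(x₀) ≠ 0 for every a ∈ Ψ that does not vanish identically on E^J; (ii) every a ∈ Ψ that vanishes identically on E^J can be written as a = Σ_{b∈J} c_b·b with real coefficients c_b that are either all ≥ 0 or all ≤ 0. Then there exists a connected component C of V ∖ ⋃_{a∈Ψ} a⁻¹(0) such that C ⊆ {x ∈ V : b(x) > 0 for all b ∈ J} and, for every a ∈ J, the hyperplane H_a := a⁻¹(0) is a wall of C, meaning: there exist z ∈ H_a and an open neighborhood W of z in V with W ∩ C = W ∩ {x ∈ V : a(x) > 0}. -/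
import Mathlib



private lemma my_affine_continuous {V : Type*} [NormedAddCommGroup V] [NormedSpace ℝ V]
    [FiniteDimensional ℝ V] (a : V →ᵃ[ℝ] ℝ) : Continuous a := by
  have h : (a : V → ℝ) = fun x => a.linear x + a 0 := by
    funext x
    have := a.map_vadd 0 x
    simpa using this
  rw [h]
  exact (a.linear.continuous_of_finiteDimensional).add continuous_const

private lemma my_linear_eq_zero {V : Type*} [AddCommGroup V] [Module ℝ V]
    (a : V →ᵃ[ℝ] ℝ) (h : ∀ x, a x = 0) : a.linear = 0 := by
  ext u
  have := a.map_vadd 0 u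
  simp [h] at this
  simpa using this.symm

private lemma my_pi_surj {V : Type*} [AddCommGroup V] [Module ℝ V]
    {ι : Type*} [Fintype ι] (f : ι → V →ₗ[ℝ] ℝ) (h : LinearIndependent ℝ f) :
    Function.Surjective (LinearMap.pi f : V →ₗ[ℝ] ι → ℝ) := by
  classical
  by_contra hns
  have hlt : LinearMap.range (LinearMap.pi f) < ⊤ := by
    rw [lt_top_iff_ne_top]
    exact fun he => hns (LinearMap.range_eq_top.mp he)
  obtain ⟨φ, φ0, hker⟩ := (LinearMap.range (LinearMap.pi f)).exists_le_ker_of_lt_top hlt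
  set c : ι → ℝ := fun i => φ fun j => if i = j then 1 else 0 with hc
  have hφ : ∀ p : ι → ℝ, φ p = ∑ i, p i * c i := by
    intro p
    rw [LinearMap.pi_apply_eq_sum_univ]
    simp [hc, smul_eq_mul]
  have hzero : ∀ i, c i = 0 := by
    have hsum : ∑ i, c i • f i = 0 := by
      ext x
      have hx : φ (LinearMap.pi f x) = 0 := hker ⟨x, rfl⟩
      rw [hφ] at hx
      simp only [LinearMap.pi_apply] at hx
      simp only [LinearMap.coe_sum, Finset.sum_apply, LinearMap.smul_apply, smul_eq_mul,
        LinearMap.zero_apply]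
      rw [← hx]
      exact Finset.sum_congr rfl fun i _ => mul_comm _ _
    exact Fintype.linearIndependent_iff.mp h c hsum
  apply φ0
  apply LinearMap.ext
  intro p
  rw [hφ]
  simp [hzero]

/-- Let `V` be a finite-dimensional real normed vector space and `Ψ` a set of affine
functions `V → ℝ`, each with nonzero linear part, such that on every bounded set only
finitely many members of `Ψ` have a zero.  Let `J ⊆ Ψ` be a finite subset whose linear
parts are linearly independent, and set `E^J := {x : ∀ a ∈ J, a x = 0}`.  Assume:
(i) there is `x₀ ∈ E^J` at which every `a ∈ Ψ` not vanishing identically on `E^J` is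
nonzero; (ii) every `a ∈ Ψ` vanishing identically on `E^J` is a linear combination of
`J` with coefficients all `≥ 0` or all `≤ 0`.  Then some connected component `C` of
`V ∖ ⋃_{a∈Ψ} a⁻¹(0)` is contained in `{x : ∀ b ∈ J, b x > 0}` and has every
`H_a = a⁻¹(0)`, `a ∈ J`, as a wall: there are `z ∈ H_a` and an open neighborhood `W`
of `z` with `W ∩ C = W ∩ {x : a x > 0}`. -/
theorem exists_chamber_with_prescribed_walls
    {V : Type*} [NormedAddCommGroup V] [NormedSpace ℝ V] [FiniteDimensional ℝ V]
    (Ψ : Set (V →ᵃ[ℝ] ℝ))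
    (hlin : ∀ a ∈ Ψ, a.linear ≠ 0)
    (hlf : ∀ s : Set V, Bornology.IsBounded s → {a ∈ Ψ | ∃ x ∈ s, a x = 0}.Finite)
    (J : Finset (V →ᵃ[ℝ] ℝ)) (hJΨ : ↑J ⊆ Ψ)
    (hJindep : LinearIndependent ℝ (fun b : {x // x ∈ J} => ((b : V →ᵃ[ℝ] ℝ)).linear))
    (x₀ : V) (hx₀ : ∀ a ∈ J, a x₀ = 0)
    (hx₀gen : ∀ a ∈ Ψ, (¬ ∀ x : V, (∀ b ∈ J, b x = 0) → a x = 0) → a x₀ ≠ 0)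
    (hcomb : ∀ a ∈ Ψ, (∀ x : V, (∀ b ∈ J, b x = 0) → a x = 0) →
      ∃ cf : {x // x ∈ J} → ℝ, ((∀ b, 0 ≤ cf b) ∨ (∀ b, cf b ≤ 0)) ∧
        ∀ x : V, a x = ∑ b ∈ J.attach, cf b * (b : V →ᵃ[ℝ] ℝ) x) :
    ∃ C : Set V,
      (∃ y ∈ {x : V | ∀ a ∈ Ψ, a x ≠ 0},
          C = connectedComponentIn {x : V | ∀ a ∈ Ψ, a x ≠ 0} y) ∧
      C ⊆ {x : V | ∀ b ∈ J, 0 < b x} ∧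
      ∀ a ∈ J, ∃ z : V, a z = 0 ∧ ∃ W : Set V, IsOpen W ∧ z ∈ W ∧
        W ∩ C = W ∩ {x : V | 0 < a x} := by
  classical
  set Ω : Set V := {x : V | ∀ a ∈ Ψ, a x ≠ 0} with hΩdef
  -- evaluation formula
  have heval : ∀ (u : V) (s : ℝ) (b : V →ᵃ[ℝ] ℝ), b (x₀ + s • u) = s * b.linear u + b x₀ := by
    intro u s b
    have h := b.map_vadd x₀ (s • u)
    have h2 : (s • u) +ᵥ x₀ = x₀ + s • u := by
      simp [vadd_eq_add, add_comm]
    rw [h2] at h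
    rw [h]
    simp [smul_eq_mul]
  -- surjectivity of the evaluation map
  have hsurj := my_pi_surj (fun b : {x // x ∈ J} => ((b : V →ᵃ[ℝ] ℝ)).linear) hJindep
  obtain ⟨v, hv⟩ := hsurj 1
  have hv' : ∀ b : {x // x ∈ J}, (b : V →ᵃ[ℝ] ℝ).linear v = 1 := by
    intro b
    have := congrFun hv b
    simpa [LinearMap.pi_apply] using this
  -- the finite relevant sets
  have hFfin : {a ∈ Ψ | ∃ x ∈ Metric.closedBall x₀ 1, a x = 0}.Finite :=
    hlf _ Metric.isBounded_closedBall
  set F : Set (V →ᵃ[ℝ] ℝ) := {a ∈ Ψ | ∃ x ∈ Metric.closedBall x₀ 1, a x = 0} with hFdef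
  set F' : Set (V →ᵃ[ℝ] ℝ) := {a ∈ F | ¬ ∀ x : V, (∀ b ∈ J, b x = 0) → a x = 0} with hF'def
  have hF'fin : F'.Finite := hFfin.subset fun a ha => ha.1
  set K : Set V := ⋃ a ∈ F', (a : V → ℝ) ⁻¹' {0} with hKdef
  have hKclosed : IsClosed K :=
    hF'fin.isClosed_biUnion fun a _ => (isClosed_singleton).preimage (my_affine_continuous a)
  have hx₀K : x₀ ∉ K := by
    intro hx
    rw [hKdef] at hx
    obtain ⟨a, haF', hax⟩ := Set.mem_iUnion₂.mp hx
    exact hx₀gen a haF'.1.1 haF'.2 hax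
  obtain ⟨δ₀, hδ₀pos, hδ₀⟩ := Metric.mem_nhds_iff.mp (hKclosed.isOpen_compl.mem_nhds hx₀K)
  set δ : ℝ := min δ₀ 1 with hδdef
  have hδpos : 0 < δ := lt_min hδ₀pos one_pos
  have hδ1 : δ ≤ 1 := min_le_right _ _
  have hδδ₀ : δ ≤ δ₀ := min_le_left _ _
  -- the convex open cell P
  set P : Set V := Metric.ball x₀ δ ∩ {x : V | ∀ b ∈ J, 0 < b x} with hPdef
  have hPconv : Convex ℝ P := by
    apply (convex_ball x₀ δ).inter
    have : {x : V | ∀ b ∈ J, 0 < b x} = ⋂ b ∈ J, (b : V → ℝ) ⁻¹' Set.Ioi 0 := by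
      ext x; simp [Set.mem_iInter]
    rw [this]
    exact convex_iInter₂ fun b _ => (convex_Ioi (0 : ℝ)).affine_preimage b
  -- sign argument
  have hsign : ∀ a ∈ Ψ, (∀ x : V, (∀ b ∈ J, b x = 0) → a x = 0) →
      ∀ x : V, (∀ b ∈ J, 0 < b x) → a x ≠ 0 := by
    intro a haΨ hvan x hx
    obtain ⟨cf, hsgn, hrep⟩ := hcomb a haΨ hvan
    have hne : ∃ b, cf b ≠ 0 := by
      by_contra hall
      push_neg at hall
      refine hlin a haΨ (my_linear_eq_zero a fun y => ?_)
      rw [hrep y]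
      simp [hall]
    obtain ⟨b0, hb0⟩ := hne
    have hb0J : (b0 : V →ᵃ[ℝ] ℝ) ∈ J := b0.2
    rcases hsgn with hpos | hneg
    · have : 0 < a x := by
        rw [hrep x]
        refine Finset.sum_pos' (fun b _ => mul_nonneg (hpos b) (hx b b.2).le)
          ⟨b0, Finset.mem_attach _ _, ?_⟩
        exact mul_pos ((hpos b0).lt_of_ne (Ne.symm hb0)) (hx b0 hb0J)
      exact this.ne'
    · have hlt : 0 < ∑ b ∈ J.attach, -(cf b * (b : V →ᵃ[ℝ] ℝ) x) := by
        refine Finset.sum_pos' (fun b _ => ?_) ⟨b0, Finset.mem_attach _ _, ?_⟩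
        · rw [neg_nonneg]
          exact mul_nonpos_iff.mpr (Or.inr ⟨hneg b, (hx b b.2).le⟩)
        · rw [neg_pos]
          exact mul_neg_of_neg_of_pos ((hneg b0).lt_of_ne hb0) (hx b0 hb0J)
      have : a x < 0 := by
        rw [hrep x]
        rw [Finset.sum_neg_distrib] at hlt
        linarith
      exact this.ne
  -- P is inside the chamber complex
  have hPΩ : P ⊆ Ω := by
    intro x hx a haΨ hax0
    have hx1 : x ∈ Metric.closedBall x₀ 1 := by
      rw [Metric.mem_closedBall]
      have := Metric.mem_ball.mp hx.1
      linarith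
    have haF : a ∈ F := ⟨haΨ, x, hx1, hax0⟩
    by_cases hvan : ∀ y : V, (∀ b ∈ J, b y = 0) → a y = 0
    · exact hsign a haΨ hvan x hx.2 hax0
    · have hxK : x ∈ K := Set.mem_biUnion (⟨haF, hvan⟩ : a ∈ F') hax0
      have : x ∈ Metric.ball x₀ δ₀ := Metric.ball_subset_ball hδδ₀ hx.1
      exact hδ₀ this hxK
  -- choice of scaling
  have hsmall : ∀ u : V, x₀ + (δ / (2 * (‖u‖ + 1))) • u ∈ Metric.ball x₀ δ ∧
      0 < δ / (2 * (‖u‖ + 1)) := by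
    intro u
    have h1 : (0 : ℝ) < ‖u‖ + 1 := by positivity
    have hspos : 0 < δ / (2 * (‖u‖ + 1)) := by positivity
    refine ⟨?_, hspos⟩
    rw [Metric.mem_ball, dist_eq_norm, add_sub_cancel_left, norm_smul, Real.norm_eq_abs,
      abs_of_pos hspos, div_mul_eq_mul_div, div_lt_iff₀ (by positivity)]
    nlinarith [norm_nonneg u]
  set t : ℝ := δ / (2 * (‖v‖ + 1)) with htdef
  set y : V := x₀ + t • v with hydef
  have htpos : 0 < t := (hsmall v).2
  have hby : ∀ b ∈ J, b y = t := by
    intro b hb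
    rw [hydef, heval, hx₀ b hb, hv' ⟨b, hb⟩]
    ring
  have hyP : y ∈ P := ⟨(hsmall v).1, fun b hb => by rw [hby b hb]; exact htpos⟩
  have hyΩ : y ∈ Ω := hPΩ hyP
  set C : Set V := connectedComponentIn Ω y with hCdef
  have hPC : P ⊆ C := hPconv.isPreconnected.subset_connectedComponentIn hyP hPΩ
  have hCΩ : C ⊆ Ω := connectedComponentIn_subset _ _
  -- C is in the positive cone
  have hCpos : C ⊆ {x : V | ∀ b ∈ J, 0 < b x} := by
    intro x hxC b hb
    have hbx : b x ≠ 0 := hCΩ hxC b (hJΨ hb)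
    by_contra hle
    push_neg at hle
    have hyC : y ∈ C := mem_connectedComponentIn hyΩ
    have hicc := isPreconnected_connectedComponentIn.intermediate_value hxC hyC
      ((my_affine_continuous b).continuousOn)
    have h0 : (0 : ℝ) ∈ Set.Icc (b x) (b y) := ⟨hle, by rw [hby b hb]; exact htpos.le⟩
    obtain ⟨x', hx'C, hx'0⟩ := hicc h0
    exact hCΩ hx'C b (hJΨ hb) hx'0
  refine ⟨C, ⟨y, hyΩ, rfl⟩, hCpos, ?_⟩
  -- walls
  intro a ha
  obtain ⟨w, hw⟩ := hsurj (fun b => if b = ⟨a, ha⟩ then 0 else 1)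
  have hw' : ∀ b : {x // x ∈ J},
      (b : V →ᵃ[ℝ] ℝ).linear w = if b = ⟨a, ha⟩ then 0 else 1 := by
    intro b
    have := congrFun hw b
    simpa [LinearMap.pi_apply] using this
  set s : ℝ := δ / (2 * (‖w‖ + 1)) with hsdef
  have hspos : 0 < s := (hsmall w).2
  set z : V := x₀ + s • w with hzdef
  have haz : a z = 0 := by
    rw [hzdef, heval, hx₀ a ha, hw' ⟨a, ha⟩]
    simp
  have hbz : ∀ b ∈ J, b ≠ a → b z = s := by
    intro b hb hba
    rw [hzdef, heval, hx₀ b hb, hw' ⟨b, hb⟩, if_neg, mul_one, add_zero]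
    simp [Subtype.ext_iff, hba]
  set U : Set V := Metric.ball x₀ δ ∩ ⋂ b ∈ J.erase a, (b : V → ℝ) ⁻¹' Set.Ioi 0 with hUdef
  have hUopen : IsOpen U :=
    Metric.isOpen_ball.inter
      (isOpen_biInter_finset fun b _ => isOpen_Ioi.preimage (my_affine_continuous b))
  have hzU : z ∈ U := by
    refine ⟨(hsmall w).1, ?_⟩
    rw [Set.mem_iInter₂]
    intro b hb
    obtain ⟨hba, hbJ⟩ := Finset.mem_erase.mp hb
    have := hbz b hbJ hba
    simp only [Set.mem_preimage, Set.mem_Ioi]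
    rw [this]
    exact hspos
  refine ⟨z, haz, U, hUopen, hzU, ?_⟩
  ext x
  simp only [Set.mem_inter_iff, Set.mem_setOf_eq]
  constructor
  · rintro ⟨hxU, hxC⟩
    exact ⟨hxU, hCpos hxC a ha⟩
  · rintro ⟨hxU, hxa⟩
    refine ⟨hxU, hPC ⟨hxU.1, fun b hb => ?_⟩⟩
    by_cases hba : b = a
    · rw [hba]; exact hxa
    · have := Set.mem_iInter₂.mp hxU.2 b (Finset.mem_erase.mpr ⟨hba, hb⟩)
      exact this
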